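/- For all integers i, j with i ≥ 1 and 0 ≤ j ≤ i, every graph G in the family F_{i,j} has every vertex of degree two or three, and has exactly i − j vertices of degree two. -/

import Mathlib

open SimpleGraph

/-- The minimum size of a feedback vertex set of `G`. -/
noncomputable def phi {V : Type} (G : SimpleGraph V) : ℕ :=
  sInf {n : ℕ | ∃ S : Finset V, S.card = n ∧ (G.induce ((S : Set V)ᶜ)).IsAcyclic}

/-- The graph obtained from `H` by subdividing the edge `uv` once: delete the edge `uv`
and add a new vertex (`none`) adjacent exactly to `u` and `v`. -/
def subdivideEdge {V : Type} (H : SimpleGraph V) (u v : V) : SimpleGraph (Option V) :=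
  SimpleGraph.fromRel (fun x y =>
    (∃ p q : V, x = some p ∧ y = some q ∧ H.Adj p q ∧ s(p, q) ≠ s(u, v)) ∨
    (x = none ∧ (y = some u ∨ y = some v)))

/-- `a` has degree exactly two in `H`. -/
def HasDegreeTwo {V : Type} (H : SimpleGraph V) (a : V) : Prop :=
  ∃ x y : V, x ≠ y ∧ H.Adj a x ∧ H.Adj a y ∧ ∀ z : V, H.Adj a z → z = x ∨ z = y

/-- The operation `∘` applied with two distinct edges `u₁v₁`, `u₂v₂` and a degree-two vertex `a`:
subdivide both edges (new vertices `inr 0`, `inr 1`), then add a new vertex `inr 2` adjacent to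
`a` and the two subdivision vertices. -/
def circOpTwo {V : Type} (H : SimpleGraph V) (u₁ v₁ u₂ v₂ a : V) : SimpleGraph (V ⊕ Fin 3) :=
  SimpleGraph.fromRel (fun x y =>
    (∃ p q : V, x = Sum.inl p ∧ y = Sum.inl q ∧ H.Adj p q ∧
      s(p, q) ≠ s(u₁, v₁) ∧ s(p, q) ≠ s(u₂, v₂)) ∨
    (x = Sum.inr 0 ∧ (y = Sum.inl u₁ ∨ y = Sum.inl v₁)) ∨
    (x = Sum.inr 1 ∧ (y = Sum.inl u₂ ∨ y = Sum.inl v₂)) ∨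
    (x = Sum.inr 2 ∧ (y = Sum.inl a ∨ y = Sum.inr 0 ∨ y = Sum.inr 1)))

/-- The operation `∘` applied with `e₁ = e₂ = uv` and a degree-two vertex `a`: subdivide the
edge `uv` twice (replacing it by the path `u, inr 0, inr 1, v`), then add a new vertex `inr 2`
adjacent to `a` and the two subdivision vertices. -/
def circOpOne {V : Type} (H : SimpleGraph V) (u v a : V) : SimpleGraph (V ⊕ Fin 3) :=
  SimpleGraph.fromRel (fun x y =>
    (∃ p q : V, x = Sum.inl p ∧ y = Sum.inl q ∧ H.Adj p q ∧ s(p, q) ≠ s(u, v)) ∨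
    (x = Sum.inr 0 ∧ (y = Sum.inl u ∨ y = Sum.inr 1)) ∨
    (x = Sum.inr 1 ∧ y = Sum.inl v) ∨
    (x = Sum.inr 2 ∧ (y = Sum.inl a ∨ y = Sum.inr 0 ∨ y = Sum.inr 1)))

/-- `G` is obtained from `H` by one application of the operation `∘` at the degree-two
vertex `a`, using two (not necessarily distinct) edges of `H`. -/
def IsCircOp {V : Type} (H : SimpleGraph V) (a : V) (G : SimpleGraph (V ⊕ Fin 3)) : Prop :=
  (∃ u₁ v₁ u₂ v₂ : V, H.Adj u₁ v₁ ∧ H.Adj u₂ v₂ ∧ s(u₁, v₁) ≠ s(u₂, v₂) ∧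
      G = circOpTwo H u₁ v₁ u₂ v₂ a) ∨
  (∃ u v : V, H.Adj u v ∧ G = circOpOne H u v a)

/-- Membership (up to isomorphism) in the family `F_{i,j}`. -/
inductive IsInF : ∀ (i j : ℕ) {V : Type}, SimpleGraph V → Prop
  | cycle (i : ℕ) (hi : 3 ≤ i) : IsInF i 0 (SimpleGraph.cycleGraph i)
  | k4 : IsInF 1 1 (⊤ : SimpleGraph (Fin 4))
  | subdiv {i j : ℕ} {V : Type} {H : SimpleGraph V} {u v : V}
      (huv : H.Adj u v) (hH : IsInF i j H) : IsInF (i + 1) j (subdivideEdge H u v)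
  | op {i j : ℕ} {V : Type} {H : SimpleGraph V} {a : V} {G : SimpleGraph (V ⊕ Fin 3)}
      (ha : HasDegreeTwo H a) (hG : IsCircOp H a G) (hH : IsInF i j H) : IsInF i (j + 1) G
  | iso {i j : ℕ} {V W : Type} {H : SimpleGraph V} {G : SimpleGraph W}
      (e : Nonempty (G ≃g H)) (hH : IsInF i j H) : IsInF i j G

/-- `G` is a graph obtained from `H` by repeatedly (possibly zero times) subdividing edges. -/
inductive IsSubdivisionOf : ∀ {V : Type}, SimpleGraph V → ∀ {W : Type}, SimpleGraph W → Prop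
  | refl {V : Type} (G : SimpleGraph V) : IsSubdivisionOf G G
  | step {V W : Type} {H : SimpleGraph V} {G : SimpleGraph W} {u v : W}
      (huv : G.Adj u v) (h : IsSubdivisionOf H G) : IsSubdivisionOf H (subdivideEdge G u v)

/-- `G` contains an induced subdivision of `H`: some induced subgraph of `G` is isomorphic
to a graph obtained from `H` by repeatedly subdividing edges. -/
def ContainsInducedSubdivision {V W : Type} (G : SimpleGraph V) (H : SimpleGraph W) : Prop :=
  ∃ (s : Set V) (U : Type) (K : SimpleGraph U),
    IsSubdivisionOf H K ∧ Nonempty (G.induce s ≃g K)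

/-- The family `𝓕`: members of `F_{4,2} ∪ F_{4,3}` of girth at least five, together with
members `H` of `F_{3,2} ∪ F_{3,3}` having an edge `e` such that `H − e` has girth at least
five. -/
def InFamilyF {W : Type} (H : SimpleGraph W) : Prop :=
  ((IsInF 4 2 H ∨ IsInF 4 3 H) ∧ 5 ≤ H.girth) ∨
  ((IsInF 3 2 H ∨ IsInF 3 3 H) ∧ ∃ e ∈ H.edgeSet, 5 ≤ (H.deleteEdges {e}).girth)

/-- `G` contains two vertex-disjoint cycles, each of length less than five. -/
def HasTwoDisjointShortCycles {V : Type} (G : SimpleGraph V) : Prop :=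
  ∃ (u v : V) (c₁ : G.Walk u u) (c₂ : G.Walk v v), c₁.IsCycle ∧ c₂.IsCycle ∧
    c₁.length < 5 ∧ c₂.length < 5 ∧ ∀ x : V, x ∈ c₁.support → x ∉ c₂.support


section Statement3Aux

variable {V : Type}

private lemma ncard_ns_eq_degree [Fintype V] (G : SimpleGraph V) [DecidableRel G.Adj] (v : V) :
    (G.neighborSet v).ncard = G.degree v := by
  rw [degree, ← Set.ncard_coe_finset, neighborFinset_def, Set.coe_toFinset]

open scoped Classical in
private lemma subdivide_ns_some (H : SimpleGraph V) {u v : V} (huv : H.Adj u v) (w : V) :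
    (subdivideEdge H u v).neighborSet (some w) =
      (fun q => if s(w, q) = s(u, v) then (none : Option V) else some q) '' H.neighborSet w := by
  ext x
  simp only [mem_neighborSet, subdivideEdge, fromRel_adj, Set.mem_image]
  constructor
  · rintro ⟨hne, h | h⟩
    · rcases h with ⟨p, q, hp, hq, hadj, hs⟩ | ⟨h, -⟩
      · obtain rfl : p = w := by injection hp.symm
        exact ⟨q, hadj, by rw [if_neg hs, hq]⟩
      · exact absurd h (by simp)
    · rcases h with ⟨p, q, hp, hq, hadj, hs⟩ | ⟨hx, h⟩
      · obtain rfl : q = w := by injection hq.symm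
        refine ⟨p, hadj.symm, ?_⟩
        rw [Sym2.eq_swap] at hs
        rw [if_neg hs, hp]
      · rcases h with h | h
        · obtain rfl : w = u := by injection h
          exact ⟨v, huv, by rw [if_pos rfl, hx]⟩
        · obtain rfl : w = v := by injection h
          exact ⟨u, huv.symm, by rw [if_pos Sym2.eq_swap, hx]⟩
  · rintro ⟨q, hadj, rfl⟩
    by_cases hs : s(w, q) = s(u, v)
    · rw [if_pos hs]
      refine ⟨by simp, Or.inr (Or.inr ⟨rfl, ?_⟩)⟩
      rw [Sym2.eq_iff] at hs
      rcases hs with ⟨rfl, rfl⟩ | ⟨rfl, rfl⟩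
      · exact Or.inl rfl
      · exact Or.inr rfl
    · rw [if_neg hs]
      exact ⟨by simpa using (H.ne_of_adj hadj), Or.inl (Or.inl ⟨w, q, rfl, rfl, hadj, hs⟩)⟩

private lemma subdivide_ns_none (H : SimpleGraph V) {u v : V} (huv : H.Adj u v) :
    (subdivideEdge H u v).neighborSet none = {some u, some v} := by
  ext x
  simp only [mem_neighborSet, subdivideEdge, fromRel_adj, Set.mem_insert_iff,
    Set.mem_singleton_iff]
  aesop

open scoped Classical in
private lemma subdivide_deg_some (H : SimpleGraph V) {u v : V} (huv : H.Adj u v) (w : V) :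
    ((subdivideEdge H u v).neighborSet (some w)).ncard = (H.neighborSet w).ncard := by
  rw [subdivide_ns_some H huv w]
  apply Set.ncard_image_of_injOn
  intro a _ b _ hab
  by_cases h1 : s(w, a) = s(u, v) <;> by_cases h2 : s(w, b) = s(u, v) <;>
    simp [h1, h2] at hab
  · rw [← Sym2.congr_right (a := w)]; rw [h1, h2]
  · exact hab

private lemma subdivide_deg_none (H : SimpleGraph V) {u v : V} (huv : H.Adj u v) :
    ((subdivideEdge H u v).neighborSet none).ncard = 2 := by
  rw [subdivide_ns_none H huv]
  exact Set.ncard_pair (by simpa using huv.ne)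

private lemma circ2_ns_inr0 (H : SimpleGraph V) {u₁ v₁ u₂ v₂ a : V} :
    (circOpTwo H u₁ v₁ u₂ v₂ a).neighborSet (Sum.inr 0) =
      {Sum.inl u₁, Sum.inl v₁, Sum.inr 2} := by
  ext x
  simp only [mem_neighborSet, circOpTwo, fromRel_adj, Set.mem_insert_iff, Set.mem_singleton_iff]
  aesop

private lemma circ2_ns_inr1 (H : SimpleGraph V) {u₁ v₁ u₂ v₂ a : V} :
    (circOpTwo H u₁ v₁ u₂ v₂ a).neighborSet (Sum.inr 1) =
      {Sum.inl u₂, Sum.inl v₂, Sum.inr 2} := by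
  ext x
  simp only [mem_neighborSet, circOpTwo, fromRel_adj, Set.mem_insert_iff, Set.mem_singleton_iff]
  aesop

private lemma circ2_ns_inr2 (H : SimpleGraph V) {u₁ v₁ u₂ v₂ a : V} :
    (circOpTwo H u₁ v₁ u₂ v₂ a).neighborSet (Sum.inr 2) =
      {Sum.inl a, Sum.inr 0, Sum.inr 1} := by
  ext x
  simp only [mem_neighborSet, circOpTwo, fromRel_adj, Set.mem_insert_iff, Set.mem_singleton_iff]
  aesop

open scoped Classical in
private lemma circ2_ns_inl (H : SimpleGraph V) {u₁ v₁ u₂ v₂ : V} (a : V)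
    (h1 : H.Adj u₁ v₁) (h2 : H.Adj u₂ v₂) (hne : s(u₁, v₁) ≠ s(u₂, v₂)) (w : V) :
    (circOpTwo H u₁ v₁ u₂ v₂ a).neighborSet (Sum.inl w) =
      (fun q => if s(w, q) = s(u₁, v₁) then Sum.inr 0
        else if s(w, q) = s(u₂, v₂) then Sum.inr 1
        else (Sum.inl q : V ⊕ Fin 3)) '' H.neighborSet w
      ∪ {x | x = Sum.inr 2 ∧ w = a} := by
  ext x
  simp only [mem_neighborSet, circOpTwo, fromRel_adj, Set.mem_union, Set.mem_image,
    Set.mem_setOf_eq]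
  constructor
  · rintro ⟨hnex, h | h⟩
    · rcases h with ⟨p, q, hp, hq, hadj, hs1, hs2⟩ | ⟨h, -⟩ | ⟨h, -⟩ | ⟨h, -⟩
      · obtain rfl : p = w := by injection hp.symm
        exact Or.inl ⟨q, hadj, by rw [if_neg hs1, if_neg hs2, hq]⟩
      all_goals exact absurd h (by simp)
    · rcases h with ⟨p, q, hp, hq, hadj, hs1, hs2⟩ | ⟨hx, h⟩ | ⟨hx, h⟩ | ⟨hx, h⟩
      · obtain rfl : q = w := by injection hq.symm
        refine Or.inl ⟨p, hadj.symm, ?_⟩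
        rw [Sym2.eq_swap] at hs1 hs2
        rw [if_neg hs1, if_neg hs2, hp]
      · rcases h with h | h
        · obtain rfl : w = u₁ := by injection h
          exact Or.inl ⟨v₁, h1, by rw [if_pos rfl, hx]⟩
        · obtain rfl : w = v₁ := by injection h
          exact Or.inl ⟨u₁, h1.symm, by rw [if_pos Sym2.eq_swap, hx]⟩
      · rcases h with h | h
        · obtain rfl : w = u₂ := by injection h
          refine Or.inl ⟨v₂, h2, ?_⟩
          rw [if_neg hne.symm, if_pos rfl, hx]
        · obtain rfl : w = v₂ := by injection h
          refine Or.inl ⟨u₂, h2.symm, ?_⟩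
          rw [if_neg (Sym2.eq_swap.trans_ne hne.symm), if_pos Sym2.eq_swap, hx]
      · rcases h with h | h | h
        · obtain rfl : w = a := by injection h
          exact Or.inr ⟨hx, rfl⟩
        all_goals exact absurd h (by simp)
  · rintro (⟨q, hadj, rfl⟩ | ⟨rfl, rfl⟩)
    · by_cases hs1 : s(w, q) = s(u₁, v₁)
      · rw [if_pos hs1]
        refine ⟨by simp, Or.inr (Or.inr (Or.inl ⟨rfl, ?_⟩))⟩
        rw [Sym2.eq_iff] at hs1
        rcases hs1 with ⟨rfl, rfl⟩ | ⟨rfl, rfl⟩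
        · exact Or.inl rfl
        · exact Or.inr rfl
      · by_cases hs2 : s(w, q) = s(u₂, v₂)
        · rw [if_neg hs1, if_pos hs2]
          refine ⟨by simp, Or.inr (Or.inr (Or.inr (Or.inl ⟨rfl, ?_⟩)))⟩
          rw [Sym2.eq_iff] at hs2
          rcases hs2 with ⟨rfl, rfl⟩ | ⟨rfl, rfl⟩
          · exact Or.inl rfl
          · exact Or.inr rfl
        · rw [if_neg hs1, if_neg hs2]
          exact ⟨by simpa using (H.ne_of_adj hadj),
            Or.inl (Or.inl ⟨w, q, rfl, rfl, hadj, hs1, hs2⟩)⟩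
    · exact ⟨by simp, Or.inr (Or.inr (Or.inr (Or.inr ⟨rfl, Or.inl rfl⟩)))⟩

private lemma circ1_ns_inr0 (H : SimpleGraph V) {u v a : V} :
    (circOpOne H u v a).neighborSet (Sum.inr 0) = {Sum.inl u, Sum.inr 1, Sum.inr 2} := by
  ext x
  simp only [mem_neighborSet, circOpOne, fromRel_adj, Set.mem_insert_iff, Set.mem_singleton_iff]
  aesop

private lemma circ1_ns_inr1 (H : SimpleGraph V) {u v a : V} :
    (circOpOne H u v a).neighborSet (Sum.inr 1) = {Sum.inl v, Sum.inr 0, Sum.inr 2} := by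
  ext x
  simp only [mem_neighborSet, circOpOne, fromRel_adj, Set.mem_insert_iff, Set.mem_singleton_iff]
  aesop

private lemma circ1_ns_inr2 (H : SimpleGraph V) {u v a : V} :
    (circOpOne H u v a).neighborSet (Sum.inr 2) = {Sum.inl a, Sum.inr 0, Sum.inr 1} := by
  ext x
  simp only [mem_neighborSet, circOpOne, fromRel_adj, Set.mem_insert_iff, Set.mem_singleton_iff]
  aesop

open scoped Classical in
private lemma circ1_ns_inl (H : SimpleGraph V) {u v : V} (a : V) (huv : H.Adj u v) (w : V) :
    (circOpOne H u v a).neighborSet (Sum.inl w) =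
      (fun q => if w = u ∧ q = v then Sum.inr 0
        else if w = v ∧ q = u then Sum.inr 1
        else (Sum.inl q : V ⊕ Fin 3)) '' H.neighborSet w
      ∪ {x | x = Sum.inr 2 ∧ w = a} := by
  ext x
  simp only [mem_neighborSet, circOpOne, fromRel_adj, Set.mem_union, Set.mem_image,
    Set.mem_setOf_eq]
  constructor
  · rintro ⟨hnex, h | h⟩
    · rcases h with ⟨p, q, hp, hq, hadj, hs⟩ | ⟨h, -⟩ | ⟨h, -⟩ | ⟨h, -⟩
      · obtain rfl : p = w := by injection hp.symm
        simp only [ne_eq, Sym2.eq_iff, not_or] at hs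
        refine Or.inl ⟨q, hadj, ?_⟩
        rw [if_neg (by tauto), if_neg (by tauto), hq]
      all_goals exact absurd h (by simp)
    · rcases h with ⟨p, q, hp, hq, hadj, hs⟩ | ⟨hx, h⟩ | ⟨hx, h⟩ | ⟨hx, h⟩
      · obtain rfl : q = w := by injection hq.symm
        simp only [ne_eq, Sym2.eq_iff, not_or] at hs
        refine Or.inl ⟨p, hadj.symm, ?_⟩
        rw [if_neg (by tauto), if_neg (by tauto), hp]
      · rcases h with h | h
        · obtain rfl : w = u := by injection h
          exact Or.inl ⟨v, huv, by rw [if_pos ⟨rfl, rfl⟩, hx]⟩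
        · exact absurd h (by simp)
      · obtain rfl : w = v := by injection h
        refine Or.inl ⟨u, huv.symm, ?_⟩
        rw [if_neg (fun hc => huv.ne (hc.1.symm.trans rfl)), if_pos ⟨rfl, rfl⟩, hx]
      · rcases h with h | h | h
        · obtain rfl : w = a := by injection h
          exact Or.inr ⟨hx, rfl⟩
        all_goals exact absurd h (by simp)
  · rintro (⟨q, hadj, rfl⟩ | ⟨rfl, rfl⟩)
    · by_cases hs1 : w = u ∧ q = v
      · obtain ⟨rfl, rfl⟩ := hs1
        rw [if_pos ⟨rfl, rfl⟩]
        exact ⟨by simp, Or.inr (Or.inr (Or.inl ⟨rfl, Or.inl rfl⟩))⟩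
      · by_cases hs2 : w = v ∧ q = u
        · obtain ⟨rfl, rfl⟩ := hs2
          rw [if_neg hs1, if_pos ⟨rfl, rfl⟩]
          exact ⟨by simp, Or.inr (Or.inr (Or.inr (Or.inl ⟨rfl, rfl⟩)))⟩
        · rw [if_neg hs1, if_neg hs2]
          refine ⟨by simpa using (H.ne_of_adj hadj),
            Or.inl (Or.inl ⟨w, q, rfl, rfl, hadj, ?_⟩)⟩
          simp only [ne_eq, Sym2.eq_iff, not_or]
          tauto
    · exact ⟨by simp, Or.inr (Or.inr (Or.inr (Or.inr ⟨rfl, Or.inl rfl⟩)))⟩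

private lemma three_ne_aux : (Sum.inr 0 : V ⊕ Fin 3) ≠ Sum.inr 1 ∧
    (Sum.inr 0 : V ⊕ Fin 3) ≠ Sum.inr 2 ∧ (Sum.inr 1 : V ⊕ Fin 3) ≠ Sum.inr 2 := by
  refine ⟨?_, ?_, ?_⟩ <;> simp [Fin.ext_iff]

private lemma circ2_deg_inr [Finite V] (H : SimpleGraph V) {u₁ v₁ u₂ v₂ a : V}
    (h1 : H.Adj u₁ v₁) (h2 : H.Adj u₂ v₂) (k : Fin 3) :
    ((circOpTwo H u₁ v₁ u₂ v₂ a).neighborSet (Sum.inr k)).ncard = 3 := by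
  fin_cases k
  · show ((circOpTwo H u₁ v₁ u₂ v₂ a).neighborSet (Sum.inr 0)).ncard = 3
    rw [circ2_ns_inr0, Set.ncard_insert_of_notMem (by simp [h1.ne]),
      Set.ncard_insert_of_notMem (by simp), Set.ncard_singleton]
  · show ((circOpTwo H u₁ v₁ u₂ v₂ a).neighborSet (Sum.inr 1)).ncard = 3
    rw [circ2_ns_inr1, Set.ncard_insert_of_notMem (by simp [h2.ne]),
      Set.ncard_insert_of_notMem (by simp), Set.ncard_singleton]
  · show ((circOpTwo H u₁ v₁ u₂ v₂ a).neighborSet (Sum.inr 2)).ncard = 3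
    rw [circ2_ns_inr2, Set.ncard_insert_of_notMem (by simp),
      Set.ncard_insert_of_notMem (by simp [Fin.ext_iff]), Set.ncard_singleton]

private lemma circ1_deg_inr [Finite V] (H : SimpleGraph V) {u v a : V} (k : Fin 3) :
    ((circOpOne H u v a).neighborSet (Sum.inr k)).ncard = 3 := by
  fin_cases k
  · show ((circOpOne H u v a).neighborSet (Sum.inr 0)).ncard = 3
    rw [circ1_ns_inr0, Set.ncard_insert_of_notMem (by simp),
      Set.ncard_insert_of_notMem (by simp [Fin.ext_iff]), Set.ncard_singleton]
  · show ((circOpOne H u v a).neighborSet (Sum.inr 1)).ncard = 3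
    rw [circ1_ns_inr1, Set.ncard_insert_of_notMem (by simp),
      Set.ncard_insert_of_notMem (by simp [Fin.ext_iff]), Set.ncard_singleton]
  · show ((circOpOne H u v a).neighborSet (Sum.inr 2)).ncard = 3
    rw [circ1_ns_inr2, Set.ncard_insert_of_notMem (by simp),
      Set.ncard_insert_of_notMem (by simp [Fin.ext_iff]), Set.ncard_singleton]

open scoped Classical in
private lemma circ2_deg_inl [Finite V] (H : SimpleGraph V) {u₁ v₁ u₂ v₂ : V} (a : V)
    (h1 : H.Adj u₁ v₁) (h2 : H.Adj u₂ v₂) (hne : s(u₁, v₁) ≠ s(u₂, v₂)) (w : V) :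
    ((circOpTwo H u₁ v₁ u₂ v₂ a).neighborSet (Sum.inl w)).ncard =
      (H.neighborSet w).ncard + (if w = a then 1 else 0) := by
  rw [circ2_ns_inl H a h1 h2 hne w]
  have himg : ((fun q => if s(w, q) = s(u₁, v₁) then Sum.inr 0
        else if s(w, q) = s(u₂, v₂) then Sum.inr 1
        else (Sum.inl q : V ⊕ Fin 3)) '' H.neighborSet w).ncard
      = (H.neighborSet w).ncard := by
    apply Set.ncard_image_of_injOn
    intro p _ q _ hpq
    simp only [] at hpq
    split_ifs at hpq
    all_goals
      first
      | aesop
      | simp [Fin.ext_iff] at hpq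
  by_cases hw : w = a
  · rw [if_pos hw]
    have hset : {x : V ⊕ Fin 3 | x = Sum.inr 2 ∧ w = a} = {Sum.inr 2} := by
      ext x; simp [hw]
    rw [hset, Set.union_singleton, Set.ncard_insert_of_notMem ?nm, himg]
    case nm =>
      rintro ⟨q, -, hfq⟩
      simp only [] at hfq
      split_ifs at hfq <;> simp [Fin.ext_iff] at hfq
  · rw [if_neg hw]
    have hset : {x : V ⊕ Fin 3 | x = Sum.inr 2 ∧ w = a} = ∅ := by
      ext x; simp [hw]
    rw [hset, Set.union_empty, himg]
    omega

open scoped Classical in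
private lemma circ1_deg_inl [Finite V] (H : SimpleGraph V) {u v : V} (a : V)
    (huv : H.Adj u v) (w : V) :
    ((circOpOne H u v a).neighborSet (Sum.inl w)).ncard =
      (H.neighborSet w).ncard + (if w = a then 1 else 0) := by
  rw [circ1_ns_inl H a huv w]
  have himg : ((fun q => if w = u ∧ q = v then Sum.inr 0
        else if w = v ∧ q = u then Sum.inr 1
        else (Sum.inl q : V ⊕ Fin 3)) '' H.neighborSet w).ncard
      = (H.neighborSet w).ncard := by
    apply Set.ncard_image_of_injOn
    intro p _ q _ hpq
    simp only [] at hpq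
    split_ifs at hpq
    all_goals
      first
      | aesop
      | simp [Fin.ext_iff] at hpq
  by_cases hw : w = a
  · rw [if_pos hw]
    have hset : {x : V ⊕ Fin 3 | x = Sum.inr 2 ∧ w = a} = {Sum.inr 2} := by
      ext x; simp [hw]
    rw [hset, Set.union_singleton, Set.ncard_insert_of_notMem ?nm, himg]
    case nm =>
      rintro ⟨q, -, hfq⟩
      simp only [] at hfq
      split_ifs at hfq <;> simp [Fin.ext_iff] at hfq
  · rw [if_neg hw]
    have hset : {x : V ⊕ Fin 3 | x = Sum.inr 2 ∧ w = a} = ∅ := by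
      ext x; simp [hw]
    rw [hset, Set.union_empty, himg]
    omega

private lemma hdt_ncard {H : SimpleGraph V} {a : V} (h : HasDegreeTwo H a) :
    (H.neighborSet a).ncard = 2 := by
  obtain ⟨x, y, hxy, hax, hay, hall⟩ := h
  have hset : H.neighborSet a = {x, y} := by
    ext z
    simp only [mem_neighborSet, Set.mem_insert_iff, Set.mem_singleton_iff]
    exact ⟨fun hz => hall z hz, by rintro (rfl | rfl) <;> assumption⟩
  rw [hset]
  exact Set.ncard_pair hxy

private lemma statement_3_aux : ∀ {i j : ℕ} {V : Type} {G : SimpleGraph V}, IsInF i j G →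
    Finite V ∧ j ≤ i ∧
      (∀ v : V, (G.neighborSet v).ncard = 2 ∨ (G.neighborSet v).ncard = 3) ∧
      {v : V | (G.neighborSet v).ncard = 2}.ncard = i - j := by
  intro i j V G h
  induction h with
  | cycle i hi =>
    obtain ⟨n, rfl⟩ : ∃ n, i = n + 3 := ⟨i - 3, by omega⟩
    have key : ∀ v : Fin (n + 3), ((cycleGraph (n + 3)).neighborSet v).ncard = 2 := by
      intro v
      rw [ncard_ns_eq_degree, cycleGraph_degree_three_le]
    refine ⟨inferInstance, by omega, fun v => Or.inl (key v), ?_⟩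
    have : {v : Fin (n + 3) | ((cycleGraph (n + 3)).neighborSet v).ncard = 2} = Set.univ := by
      ext v; simp [key v]
    rw [this, Set.ncard_univ, Nat.card_eq_fintype_card, Fintype.card_fin]
    omega
  | k4 =>
    have key : ∀ v : Fin 4, (((⊤ : SimpleGraph (Fin 4)).neighborSet v)).ncard = 3 := by
      intro v
      rw [ncard_ns_eq_degree, complete_graph_degree]
      rfl
    refine ⟨inferInstance, le_refl 1, fun v => Or.inr (key v), ?_⟩
    have : {v : Fin 4 | (((⊤ : SimpleGraph (Fin 4)).neighborSet v)).ncard = 2} = ∅ := by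
      ext v; rw [Set.mem_setOf_eq, key v]; simp
    rw [this, Set.ncard_empty]
  | @subdiv i j W H u v huv hH ih =>
    obtain ⟨hfin, hji, hdeg, hD⟩ := ih
    haveI := hfin
    haveI : Finite (Option W) := Finite.of_equiv (W ⊕ PUnit.{1}) (Equiv.optionEquivSumPUnit W).symm
    refine ⟨inferInstance, by omega, ?_, ?_⟩
    · intro x
      match x with
      | none => exact Or.inl (subdivide_deg_none H huv)
      | some w => rw [subdivide_deg_some H huv w]; exact hdeg w
    · have hset : {x : Option W | ((subdivideEdge H u v).neighborSet x).ncard = 2}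
          = insert none (some '' {w : W | (H.neighborSet w).ncard = 2}) := by
        ext x
        match x with
        | none => simp [subdivide_deg_none H huv]
        | some w => simp [subdivide_deg_some H huv w]
      rw [hset, Set.ncard_insert_of_notMem (by simp),
        Set.ncard_image_of_injective _ (Option.some_injective W), hD]
      omega
  | @op i j W H a G ha hG hH ih =>
    obtain ⟨hfin, hji, hdeg, hD⟩ := ih
    haveI := hfin
    have ha2 : (H.neighborSet a).ncard = 2 := hdt_ncard ha
    have haD : a ∈ {w : W | (H.neighborSet w).ncard = 2} := ha2
    have hpos : 0 < i - j := by
      rw [← hD]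
      exact (Set.ncard_pos (Set.toFinite _)).mpr ⟨a, haD⟩
    have hji' : j + 1 ≤ i := by omega
    rcases hG with ⟨u₁, v₁, u₂, v₂, h1, h2, hne, rfl⟩ | ⟨u, v, huv, rfl⟩
    · refine ⟨inferInstance, hji', ?_, ?_⟩
      · intro x
        match x with
        | Sum.inl w =>
          rw [circ2_deg_inl H a h1 h2 hne w]
          by_cases hw : w = a
          · subst hw
            rw [ha2, if_pos rfl]
            exact Or.inr rfl
          · rw [if_neg hw, Nat.add_zero]
            exact hdeg w
        | Sum.inr k => exact Or.inr (circ2_deg_inr H h1 h2 k)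
      · have hset : {x : W ⊕ Fin 3 | ((circOpTwo H u₁ v₁ u₂ v₂ a).neighborSet x).ncard = 2}
            = Sum.inl '' ({w : W | (H.neighborSet w).ncard = 2} \ {a}) := by
          ext x
          match x with
          | Sum.inl w =>
            simp only [Set.mem_setOf_eq, Set.mem_image, Set.mem_diff, Set.mem_singleton_iff,
              Sum.inl.injEq, circ2_deg_inl H a h1 h2 hne w]
            by_cases hw : w = a
            · subst hw
              rw [ha2, if_pos rfl]
              constructor
              · intro h; omega
              · rintro ⟨w', ⟨-, hw'⟩, rfl⟩; exact absurd rfl hw'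
            · rw [if_neg hw, Nat.add_zero]
              constructor
              · intro h; exact ⟨w, ⟨h, hw⟩, rfl⟩
              · rintro ⟨w', hw', rfl⟩; exact hw'.1
          | Sum.inr k =>
            simp only [Set.mem_setOf_eq, Set.mem_image, circ2_deg_inr H h1 h2 k]
            constructor
            · intro h; omega
            · rintro ⟨w', -, h⟩; exact absurd h (by simp)
        rw [hset, Set.ncard_image_of_injective _ Sum.inl_injective,
          Set.ncard_diff_singleton_of_mem haD, hD]
        omega
    · refine ⟨inferInstance, hji', ?_, ?_⟩
      · intro x
        match x with
        | Sum.inl w =>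
          rw [circ1_deg_inl H a huv w]
          by_cases hw : w = a
          · subst hw
            rw [ha2, if_pos rfl]
            exact Or.inr rfl
          · rw [if_neg hw, Nat.add_zero]
            exact hdeg w
        | Sum.inr k => exact Or.inr (circ1_deg_inr H k)
      · have hset : {x : W ⊕ Fin 3 | ((circOpOne H u v a).neighborSet x).ncard = 2}
            = Sum.inl '' ({w : W | (H.neighborSet w).ncard = 2} \ {a}) := by
          ext x
          match x with
          | Sum.inl w =>
            simp only [Set.mem_setOf_eq, Set.mem_image, Set.mem_diff, Set.mem_singleton_iff,
              Sum.inl.injEq, circ1_deg_inl H a huv w]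
            by_cases hw : w = a
            · subst hw
              rw [ha2, if_pos rfl]
              constructor
              · intro h; omega
              · rintro ⟨w', ⟨-, hw'⟩, rfl⟩; exact absurd rfl hw'
            · rw [if_neg hw, Nat.add_zero]
              constructor
              · intro h; exact ⟨w, ⟨h, hw⟩, rfl⟩
              · rintro ⟨w', hw', rfl⟩; exact hw'.1
          | Sum.inr k =>
            simp only [Set.mem_setOf_eq, Set.mem_image, circ1_deg_inr H k]
            constructor
            · intro h; omega
            · rintro ⟨w', -, h⟩; exact absurd h (by simp)
        rw [hset, Set.ncard_image_of_injective _ Sum.inl_injective,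
          Set.ncard_diff_singleton_of_mem haD, hD]
        omega
  | @iso i j W U H G e hH ih =>
    obtain ⟨e⟩ := e
    obtain ⟨hfin, hji, hdeg, hD⟩ := ih
    haveI := hfin
    haveI : Finite _ := Finite.of_equiv _ e.toEquiv.symm
    have key : ∀ w, ((G.neighborSet w)).ncard = ((H.neighborSet (e w))).ncard := by
      intro w
      rw [← Nat.card_coe_set_eq, ← Nat.card_coe_set_eq]
      exact Nat.card_congr (e.mapNeighborSet w)
    refine ⟨inferInstance, hji, fun w => key w ▸ hdeg (e w), ?_⟩
    have hset : {w | ((G.neighborSet w)).ncard = 2}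
        = e.symm '' {v | ((H.neighborSet v)).ncard = 2} := by
      ext w
      simp only [Set.mem_setOf_eq, Set.mem_image]
      constructor
      · intro h
        exact ⟨e w, by rw [← key w]; exact h, RelIso.symm_apply_apply e w⟩
      · rintro ⟨v, hv, rfl⟩
        rw [key, RelIso.apply_symm_apply]
        exact hv
    rw [hset, Set.ncard_image_of_injective _ (RelIso.injective _), hD]

end Statement3Aux

/-- For `i ≥ 1` and `0 ≤ j ≤ i`, every `G ∈ F_{i,j}` has every vertex of degree
two or three, and has exactly `i − j` vertices of degree two. -/
theorem statement_3 (i j : ℕ) (hi : 1 ≤ i) (hj : j ≤ i) {V : Type} (G : SimpleGraph V)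
    (hG : IsInF i j G) :
    (∀ v : V, (G.neighborSet v).ncard = 2 ∨ (G.neighborSet v).ncard = 3) ∧
      {v : V | (G.neighborSet v).ncard = 2}.ncard = i - j := by
  obtain ⟨-, -, h1, h2⟩ := statement_3_aux hG
  exact ⟨h1, h2⟩
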